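/- Let A be SPD and S the Additive-Schwarz matrix for blocks 𝓑 covering {1,...,n}. For any vector v admitting a decomposition v = Σ_{B∈𝓑} R_Bᵀ v_B, one has vᵀ S⁻¹ v ≤ Σ_{B∈𝓑} v_Bᵀ A_B v_B (the easy inequality direction of the Additive-Schwarz lemma). -/

import Mathlib

open scoped Matrix

def restr {n : ℕ} (B : Finset (Fin n)) : Matrix {i // i ∈ B} (Fin n) ℝ :=
  Matrix.of fun b j => if (b : Fin n) = j then 1 else 0

lemma restr_mulVec {n : ℕ} (B : Finset (Fin n)) (x : Fin n → ℝ) (b : {i // i ∈ B}) :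
    (restr B *ᵥ x) b = x b := by
  simp [restr, Matrix.mulVec, dotProduct]

lemma restrT_mulVec {n : ℕ} (B : Finset (Fin n)) (x : {i // i ∈ B} → ℝ) (b : {i // i ∈ B}) :
    ((restr B)ᵀ *ᵥ x) (b : Fin n) = x b := by
  simp only [Matrix.mulVec, dotProduct, Matrix.transpose_apply, restr, Matrix.of_apply]
  rw [Finset.sum_eq_single b]
  · simp
  · intro c _ hc
    simp [Subtype.coe_injective.ne hc]
  · simp

lemma dot_sum {ι : Type*} (s : Finset ι) {m : Type*} [Fintype m] (u : m → ℝ)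
    (f : ι → (m → ℝ)) : u ⬝ᵥ (∑ i ∈ s, f i) = ∑ i ∈ s, u ⬝ᵥ f i := by
  classical
  simp only [dotProduct, Finset.sum_apply, Finset.mul_sum]
  exact Finset.sum_comm

lemma sum_mulVec {ι : Type*} (s : Finset ι) {m : Type*} [Fintype m]
    (f : ι → Matrix m m ℝ) (x : m → ℝ) :
    (∑ i ∈ s, f i) *ᵥ x = ∑ i ∈ s, (f i *ᵥ x) := by
  classical
  induction s using Finset.induction with
  | empty => simp [Matrix.mulVec, dotProduct]
  | insert _ _ h ih => simp [Finset.sum_insert h, Matrix.add_mulVec, ih]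

lemma quad {m q : Type*} [Fintype m] [Fintype q] (N : Matrix q q ℝ) (P : Matrix q m ℝ)
    (x : m → ℝ) : x ⬝ᵥ ((Pᵀ * N * P) *ᵥ x) = (P *ᵥ x) ⬝ᵥ (N *ᵥ (P *ᵥ x)) := by
  rw [← Matrix.mulVec_mulVec, ← Matrix.mulVec_mulVec, Matrix.dotProduct_mulVec,
    Matrix.vecMul_transpose]

/-- Peter–Paul with ε = 1 for a positive definite matrix. -/
lemma key_ineq {m : Type*} [Fintype m] [DecidableEq m] {M : Matrix m m ℝ}
    (hM : M.PosDef) (x y : m → ℝ) :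
    x ⬝ᵥ y ≤ (x ⬝ᵥ (M⁻¹ *ᵥ x) + y ⬝ᵥ (M *ᵥ y)) / 2 := by
  have hMT : Mᵀ = M := by
    have := hM.isHermitian
    rwa [Matrix.IsHermitian, Matrix.conjTranspose_eq_transpose_of_trivial] at this
  have hinv : M * M⁻¹ = 1 :=
    Matrix.mul_nonsing_inv M ((Matrix.isUnit_iff_isUnit_det M).mp hM.isUnit)
  set z : m → ℝ := y - M⁻¹ *ᵥ x with hz
  have h0 : 0 ≤ z ⬝ᵥ (M *ᵥ z) := by
    have := hM.posSemidef.dotProduct_mulVec_nonneg z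
    simpa using this
  have e1 : M *ᵥ z = M *ᵥ y - x := by
    rw [hz, Matrix.mulVec_sub, Matrix.mulVec_mulVec, hinv, Matrix.one_mulVec]
  have hMinvT : M⁻¹ᵀ = M⁻¹ := by
    have := hM.inv.isHermitian
    rwa [Matrix.IsHermitian, Matrix.conjTranspose_eq_transpose_of_trivial] at this
  have hinv' : M⁻¹ * M = 1 :=
    Matrix.nonsing_inv_mul M ((Matrix.isUnit_iff_isUnit_det M).mp hM.isUnit)
  have e2 : (M⁻¹ *ᵥ x) ⬝ᵥ (M *ᵥ y) = x ⬝ᵥ y := by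
    rw [Matrix.dotProduct_mulVec, Matrix.vecMul_mulVec, hMinvT, hinv', Matrix.vecMul_one]
  have e3 : (M⁻¹ *ᵥ x) ⬝ᵥ x = x ⬝ᵥ (M⁻¹ *ᵥ x) := dotProduct_comm _ _
  have expand : z ⬝ᵥ (M *ᵥ z) = y ⬝ᵥ (M *ᵥ y) - y ⬝ᵥ x - x ⬝ᵥ y + x ⬝ᵥ (M⁻¹ *ᵥ x) := by
    rw [e1, hz]
    simp only [sub_dotProduct, dotProduct_sub, e2, e3]
    ring
  have e4 : y ⬝ᵥ x = x ⬝ᵥ y := dotProduct_comm _ _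
  rw [expand, e4] at h0
  linarith

/-- The easy direction of the Additive-Schwarz lemma: for any admissible decomposition
`v = Σ_B R_Bᵀ v_B` one has `vᵀ S⁻¹ v ≤ Σ_B v_Bᵀ A_B v_B`. -/
theorem stmt_16 {n : ℕ} (A : Matrix (Fin n) (Fin n) ℝ) (hA : A.PosDef)
    (𝓑 : Finset (Finset (Fin n))) (hcov : ∀ i : Fin n, ∃ B ∈ 𝓑, i ∈ B)
    (v : Fin n → ℝ) (w : (B : Finset (Fin n)) → ({i // i ∈ B} → ℝ))
    (hw : (∑ B ∈ 𝓑, (restr B)ᵀ *ᵥ w B) = v) :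
    v ⬝ᵥ ((∑ B ∈ 𝓑, (restr B)ᵀ * (restr B * A * (restr B)ᵀ)⁻¹ * restr B)⁻¹ *ᵥ v) ≤
      ∑ B ∈ 𝓑, w B ⬝ᵥ ((restr B * A * (restr B)ᵀ) *ᵥ w B) := by
  classical
  set S : Matrix (Fin n) (Fin n) ℝ :=
    ∑ B ∈ 𝓑, (restr B)ᵀ * (restr B * A * (restr B)ᵀ)⁻¹ * restr B with hS
  -- each block matrix A_B is positive definite
  have hAB : ∀ B : Finset (Fin n), (restr B * A * (restr B)ᵀ).PosDef := by
    intro B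
    refine Matrix.PosDef.of_dotProduct_mulVec_pos ?_ ?_
    · rw [← Matrix.conjTranspose_eq_transpose_of_trivial (restr B)]
      exact Matrix.isHermitian_mul_mul_conjTranspose _ hA.isHermitian
    · intro x hx
      have hRx : (restr B)ᵀ *ᵥ x ≠ 0 := by
        intro h
        apply hx
        funext b
        have := congrFun h (b : Fin n)
        rwa [restrT_mulVec] at this
      have hpos := hA.dotProduct_mulVec_pos hRx
      simp only [star_trivial] at hpos ⊢
      have hrw : restr B * A * (restr B)ᵀ = ((restr B)ᵀ)ᵀ * A * (restr B)ᵀ := by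
        rw [Matrix.transpose_transpose]
      rw [hrw, quad]
      exact hpos
  -- quadratic form of each summand of S
  have hterm : ∀ (B : Finset (Fin n)) (x : Fin n → ℝ),
      x ⬝ᵥ (((restr B)ᵀ * (restr B * A * (restr B)ᵀ)⁻¹ * restr B) *ᵥ x)
        = (restr B *ᵥ x) ⬝ᵥ ((restr B * A * (restr B)ᵀ)⁻¹ *ᵥ (restr B *ᵥ x)) := by
    intro B x
    rw [← Matrix.mulVec_mulVec, ← Matrix.mulVec_mulVec, Matrix.dotProduct_mulVec,
      Matrix.vecMul_transpose]
  -- S is positive definite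
  have hSpd : S.PosDef := by
    refine Matrix.PosDef.of_dotProduct_mulVec_pos ?_ ?_
    · rw [hS]
      apply Finset.sum_induction _ Matrix.IsHermitian
        (fun a b ha hb => ha.add hb) Matrix.isHermitian_zero
      intro B _
      have : ((restr B)ᵀ * (restr B * A * (restr B)ᵀ)⁻¹ * restr B)
          = (restr B)ᴴ * (restr B * A * (restr B)ᵀ)⁻¹ * ((restr B)ᴴ)ᴴ := by
        rw [Matrix.conjTranspose_conjTranspose, Matrix.conjTranspose_eq_transpose_of_trivial]
      rw [this]
      exact Matrix.isHermitian_conjTranspose_mul_mul _ ((hAB B).inv).isHermitian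
    · intro x hx
      simp only [star_trivial]
      rw [hS, sum_mulVec, dot_sum]
      obtain ⟨i, hi⟩ := Function.ne_iff.mp hx
      obtain ⟨B₀, hB₀, hiB₀⟩ := hcov i
      have hRx : restr B₀ *ᵥ x ≠ 0 := by
        intro h
        apply hi
        have := congrFun h ⟨i, hiB₀⟩
        rwa [restr_mulVec] at this
      have hpos : 0 < x ⬝ᵥ (((restr B₀)ᵀ * (restr B₀ * A * (restr B₀)ᵀ)⁻¹ * restr B₀) *ᵥ x) := by
        rw [hterm]
        have := (hAB B₀).inv.dotProduct_mulVec_pos hRx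
        simpa using this
      have hnonneg : ∀ B ∈ 𝓑,
          0 ≤ x ⬝ᵥ (((restr B)ᵀ * (restr B * A * (restr B)ᵀ)⁻¹ * restr B) *ᵥ x) := by
        intro B _
        rw [hterm]
        have := (hAB B).inv.posSemidef.dotProduct_mulVec_nonneg (restr B *ᵥ x)
        simpa using this
      exact Finset.sum_pos' hnonneg ⟨B₀, hB₀, hpos⟩
  have hSinv : S * S⁻¹ = 1 :=
    Matrix.mul_nonsing_inv S ((Matrix.isUnit_iff_isUnit_det S).mp hSpd.isUnit)
  set u : Fin n → ℝ := S⁻¹ *ᵥ v with hu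
  -- LHS = u ⬝ v as sum of block pairings
  have hsplit : v ⬝ᵥ (S⁻¹ *ᵥ v) = ∑ B ∈ 𝓑, (restr B *ᵥ u) ⬝ᵥ w B := by
    rw [← hu, dotProduct_comm, ← hw, dot_sum]
    refine Finset.sum_congr rfl fun B _ => ?_
    rw [Matrix.dotProduct_mulVec, Matrix.vecMul_transpose]
  -- Σ_B (R_B u) A_B⁻¹ (R_B u) = u ⬝ S u = u ⬝ v = v ⬝ S⁻¹ v
  have henergy : ∑ B ∈ 𝓑, (restr B *ᵥ u) ⬝ᵥ ((restr B * A * (restr B)ᵀ)⁻¹ *ᵥ (restr B *ᵥ u))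
      = v ⬝ᵥ (S⁻¹ *ᵥ v) := by
    have h1 : u ⬝ᵥ (S *ᵥ u) = ∑ B ∈ 𝓑,
        (restr B *ᵥ u) ⬝ᵥ ((restr B * A * (restr B)ᵀ)⁻¹ *ᵥ (restr B *ᵥ u)) := by
      rw [hS, sum_mulVec, dot_sum]
      exact Finset.sum_congr rfl fun B _ => hterm B u
    have h2 : u ⬝ᵥ (S *ᵥ u) = v ⬝ᵥ (S⁻¹ *ᵥ v) := by
      rw [hu, Matrix.mulVec_mulVec, hSinv, Matrix.one_mulVec, dotProduct_comm]
    rw [← h1, h2]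
  -- apply the Peter–Paul inequality blockwise
  have hPP : ∑ B ∈ 𝓑, (restr B *ᵥ u) ⬝ᵥ w B ≤
      (∑ B ∈ 𝓑, (restr B *ᵥ u) ⬝ᵥ ((restr B * A * (restr B)ᵀ)⁻¹ *ᵥ (restr B *ᵥ u))
        + ∑ B ∈ 𝓑, w B ⬝ᵥ ((restr B * A * (restr B)ᵀ) *ᵥ w B)) / 2 := by
    rw [div_eq_inv_mul, ← Finset.sum_add_distrib, Finset.mul_sum]
    refine Finset.sum_le_sum fun B _ => ?_
    have := key_ineq (hAB B) (restr B *ᵥ u) (w B)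
    rw [div_eq_inv_mul] at this
    exact this
  rw [hsplit]
  rw [henergy, hsplit] at hPP
  linarith
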